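/- Fix r, q, σ, T with σ > 0, T > 0, fix x* > 0, h ∈ ℝ, and θ ∈ (0,1). Define α^g(t,u,x) = (t/u)·ln x − ((u² − t²)/(2u))·(r − q + σ²/2) and β^g(t,u) = (σ/(u·√3))·√(u³ − t³) for 0 ≤ t ≤ u. Then lim_{τ→0⁺} [ln(x*·(1 + hσ·√(τ(1−θ)))) − α^g(T−τ, T−τ(1−θ), x*·(1 + hσ·√τ))] / β^g(T−τ, T−τ(1−θ)) = −h·(1 − √(1−θ))/√θ. -/

import Mathlib

open Real Filter Topology

/-- `α^g(t,u,x) = (t/u)·ln x − ((u²−t²)/(2u))·(r−q+σ²/2)`. -/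
noncomputable def alphaG (r q σ t u x : ℝ) : ℝ :=
  (t / u) * Real.log x - ((u ^ 2 - t ^ 2) / (2 * u)) * (r - q + σ ^ 2 / 2)

/-- `β^g(t,u) = (σ/(u√3))·√(u³−t³)`. -/
noncomputable def betaG (σ t u : ℝ) : ℝ :=
  (σ / (u * Real.sqrt 3)) * Real.sqrt (u ^ 3 - t ^ 3)

set_option maxHeartbeats 1000000

lemma aux_log (a : ℝ) :
    Tendsto (fun s : ℝ => Real.log (1 + a * s) / s) (𝓝[>] (0:ℝ)) (𝓝 a) := by
  have h1 : HasDerivAt (fun s : ℝ => 1 + a * s) a 0 := by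
    simpa using ((hasDerivAt_id (0:ℝ)).const_mul a).const_add 1
  have h0 : HasDerivAt (fun s : ℝ => Real.log (1 + a * s)) a 0 := by
    simpa using h1.log (by norm_num)
  have h2 := hasDerivAt_iff_tendsto_slope.mp h0
  refine Tendsto.congr' ?_ (h2.mono_left (nhdsWithin_mono _ ?_))
  · filter_upwards [self_mem_nhdsWithin] with s hs
    simp [slope_def_field]
  · intro x hx
    exact ne_of_gt hx

lemma aux_sqrt : Tendsto Real.sqrt (𝓝[>] (0:ℝ)) (𝓝[>] (0:ℝ)) := by
  rw [tendsto_nhdsWithin_iff]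
  constructor
  · simpa using (Real.continuous_sqrt.tendsto' 0 0 (by simp)).mono_left nhdsWithin_le_nhds
  · filter_upwards [self_mem_nhdsWithin] with τ hτ
    exact Real.sqrt_pos.mpr hτ

lemma main_sq (r q σ T xs h θ : ℝ) (hσ : 0 < σ) (hT : 0 < T)
    (hxs : 0 < xs) (hθ : θ ∈ Set.Ioo (0:ℝ) 1) :
    Tendsto (fun s : ℝ =>
        (Real.log (xs * (1 + h * σ * Real.sqrt (1-θ) * s))
            - alphaG r q σ (T - s^2) (T - s^2 * (1 - θ)) (xs * (1 + h * σ * s)))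
          / betaG σ (T - s^2) (T - s^2 * (1 - θ)))
      (𝓝[>] 0) (𝓝 (-h * (1 - Real.sqrt (1 - θ)) / Real.sqrt θ)) := by
  obtain ⟨hθ0, hθ1⟩ := hθ
  have h1θ : (0:ℝ) < 1 - θ := by linarith
  have hsθ : 0 < Real.sqrt θ := Real.sqrt_pos.mpr hθ0
  set c : ℝ := r - q + σ^2/2 with hc
  set A : ℝ := h * σ * Real.sqrt (1-θ) with hA
  set B : ℝ := h * σ with hB
  -- limits of the building blocks
  have hid : Tendsto (fun s : ℝ => s) (𝓝[>] (0:ℝ)) (𝓝 0) :=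
    tendsto_id.mono_right nhdsWithin_le_nhds
  have hu : Tendsto (fun s : ℝ => T - s^2*(1-θ)) (𝓝[>] (0:ℝ)) (𝓝 T) := by
    have hcont : Continuous fun s : ℝ => T - s^2*(1-θ) := by continuity
    simpa using (hcont.tendsto 0).mono_left nhdsWithin_le_nhds
  have ht : Tendsto (fun s : ℝ => T - s^2) (𝓝[>] (0:ℝ)) (𝓝 T) := by
    have hcont : Continuous fun s : ℝ => T - s^2 := by continuity
    simpa using (hcont.tendsto 0).mono_left nhdsWithin_le_nhds
  -- numerator over s
  have p1 : Tendsto (fun s : ℝ => θ * Real.log xs * s / (T - s^2*(1-θ)))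
      (𝓝[>] (0:ℝ)) (𝓝 0) := by
    have hconst : Tendsto (fun _ : ℝ => θ * Real.log xs) (𝓝[>] (0:ℝ)) (𝓝 (θ * Real.log xs)) :=
      tendsto_const_nhds
    have := (hconst.mul hid).div hu hT.ne'
    have h0 : θ * Real.log xs * 0 / T = 0 := by simp
    rw [h0] at this
    exact this
  have p2 : Tendsto (fun s : ℝ => Real.log (1 + A * s) / s) (𝓝[>] (0:ℝ)) (𝓝 A) := aux_log A
  have p3 : Tendsto (fun s : ℝ =>
      ((T - s^2) / (T - s^2*(1-θ))) * (Real.log (1 + B * s) / s)) (𝓝[>] (0:ℝ)) (𝓝 B) := by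
    have := (ht.div hu hT.ne').mul (aux_log B)
    simpa [div_self hT.ne'] using this
  have p4 : Tendsto (fun s : ℝ =>
      θ * ((T - s^2*(1-θ)) + (T - s^2)) / (2*(T - s^2*(1-θ))) * c * s)
      (𝓝[>] (0:ℝ)) (𝓝 0) := by
    have hnum : Tendsto (fun s : ℝ => θ * ((T - s^2*(1-θ)) + (T - s^2)))
        (𝓝[>] (0:ℝ)) (𝓝 (θ * (T + T))) := tendsto_const_nhds.mul (hu.add ht)
    have hden : Tendsto (fun s : ℝ => 2*(T - s^2*(1-θ))) (𝓝[>] (0:ℝ)) (𝓝 (2*T)) :=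
      tendsto_const_nhds.mul hu
    have hconst : Tendsto (fun _ : ℝ => c) (𝓝[>] (0:ℝ)) (𝓝 c) := tendsto_const_nhds
    have := ((hnum.div hden (by positivity)).mul hconst).mul hid
    simpa using this
  have hNum : Tendsto (fun s : ℝ =>
      θ * Real.log xs * s / (T - s^2*(1-θ)) + Real.log (1 + A * s) / s
        - ((T - s^2) / (T - s^2*(1-θ))) * (Real.log (1 + B * s) / s)
        + θ * ((T - s^2*(1-θ)) + (T - s^2)) / (2*(T - s^2*(1-θ))) * c * s)
      (𝓝[>] (0:ℝ)) (𝓝 (A - B)) := by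
    have := ((p1.add p2).sub p3).add p4
    simpa using this
  -- denominator over s
  have hQ : Tendsto (fun s : ℝ =>
      σ * Real.sqrt θ * Real.sqrt ((T - s^2*(1-θ))^2 + (T - s^2*(1-θ))*(T - s^2) + (T - s^2)^2)
        / ((T - s^2*(1-θ)) * Real.sqrt 3)) (𝓝[>] (0:ℝ)) (𝓝 (σ * Real.sqrt θ)) := by
    have hcont : Continuous fun s : ℝ =>
        σ * Real.sqrt θ * Real.sqrt ((T - s^2*(1-θ))^2 + (T - s^2*(1-θ))*(T - s^2) + (T - s^2)^2) :=
      continuous_const.mul (Real.continuous_sqrt.comp (by continuity))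
    have hnum : Tendsto (fun s : ℝ =>
        σ * Real.sqrt θ * Real.sqrt ((T - s^2*(1-θ))^2 + (T - s^2*(1-θ))*(T - s^2) + (T - s^2)^2))
        (𝓝[>] (0:ℝ)) (𝓝 (σ * Real.sqrt θ * Real.sqrt (T^2 + T*T + T^2))) := by
      simpa using (hcont.tendsto 0).mono_left nhdsWithin_le_nhds
    have hden : Tendsto (fun s : ℝ => (T - s^2*(1-θ)) * Real.sqrt 3)
        (𝓝[>] (0:ℝ)) (𝓝 (T * Real.sqrt 3)) := hu.mul tendsto_const_nhds
    have h3 : (0:ℝ) < Real.sqrt 3 := Real.sqrt_pos.mpr (by norm_num)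
    have hTQ : Real.sqrt (T^2 + T*T + T^2) = Real.sqrt 3 * T := by
      rw [show T^2 + T*T + T^2 = 3*T^2 by ring, Real.sqrt_mul (by norm_num), Real.sqrt_sq hT.le]
    have := hnum.div hden (by positivity)
    rw [hTQ] at this
    have heq : σ * Real.sqrt θ * (Real.sqrt 3 * T) / (T * Real.sqrt 3) = σ * Real.sqrt θ := by
      have h3 : (0:ℝ) < Real.sqrt 3 := Real.sqrt_pos.mpr (by norm_num)
      field_simp
    rwa [heq] at this
  -- combine
  have hratio := hNum.div hQ (by positivity)
  have hval : (A - B) / (σ * Real.sqrt θ) = -h * (1 - Real.sqrt (1-θ)) / Real.sqrt θ := by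
    rw [hA, hB]
    field_simp
    ring
  rw [hval] at hratio
  refine hratio.congr' ?_
  -- eventual equality
  have hε : (0:ℝ) < min (Real.sqrt T) (|h| * σ + 1)⁻¹ := by positivity
  filter_upwards [Ioo_mem_nhdsGT_of_mem (Set.mem_Ico.mpr ⟨le_refl 0, hε⟩)] with s hs
  obtain ⟨hs0, hsε⟩ := hs
  have hslt1 : s < Real.sqrt T := lt_of_lt_of_le hsε (min_le_left _ _)
  have hslt2 : s < (|h| * σ + 1)⁻¹ := lt_of_lt_of_le hsε (min_le_right _ _)
  have hs2T : s^2 < T := by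
    have := mul_lt_mul'' hslt1 hslt1 hs0.le hs0.le
    rwa [Real.mul_self_sqrt hT.le, ← sq] at this
  have ht0 : 0 < T - s^2 := by linarith
  have hu0 : 0 < T - s^2*(1-θ) := by nlinarith [sq_nonneg s]
  have habs : (|h| * σ) * s < 1 := by
    have h1 : (|h| * σ + 1) * s < 1 := by
      have h2 := mul_lt_mul_of_pos_left hslt2 (show (0:ℝ) < |h| * σ + 1 by positivity)
      rwa [mul_inv_cancel₀ (by positivity : (|h| * σ + 1) ≠ 0)] at h2
    nlinarith [abs_nonneg h]
  have hBpos : 0 < 1 + B * s := by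
    have : |B * s| = |h| * σ * s := by
      rw [hB, abs_mul, abs_mul, abs_of_pos hσ, abs_of_pos hs0]
    nlinarith [neg_abs_le (B*s)]
  have hApos : 0 < 1 + A * s := by
    have hsq1 : Real.sqrt (1-θ) ≤ 1 := Real.sqrt_le_one.mpr (by linarith)
    have hsqnn : 0 ≤ Real.sqrt (1-θ) := Real.sqrt_nonneg _
    have hkey : |A * s| ≤ |h| * σ * s := by
      rw [hA, hB, abs_mul, abs_mul, abs_mul, abs_of_pos hσ, abs_of_pos hs0,
        abs_of_nonneg hsqnn]
      nlinarith [mul_nonneg (mul_nonneg (mul_nonneg (abs_nonneg h) hσ.le) hs0.le)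
        (by linarith : (0:ℝ) ≤ 1 - Real.sqrt (1-θ))]
    nlinarith [neg_abs_le (A*s)]
  have hQpos : (0:ℝ) < (T - s^2*(1-θ))^2 + (T - s^2*(1-θ))*(T - s^2) + (T - s^2)^2 := by
    nlinarith
  -- sqrt factorization
  have hfac : (T - s^2*(1-θ))^3 - (T - s^2)^3
      = s^2 * (θ * ((T - s^2*(1-θ))^2 + (T - s^2*(1-θ))*(T - s^2) + (T - s^2)^2)) := by ring
  have hsqrtfac : Real.sqrt ((T - s^2*(1-θ))^3 - (T - s^2)^3)
      = s * (Real.sqrt θ * Real.sqrt ((T - s^2*(1-θ))^2 + (T - s^2*(1-θ))*(T - s^2) + (T - s^2)^2)) := by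
    rw [hfac, Real.sqrt_mul (sq_nonneg s), Real.sqrt_sq hs0.le, Real.sqrt_mul hθ0.le]
  have hlog1 : Real.log (xs * (1 + A * s)) = Real.log xs + Real.log (1 + A * s) :=
    Real.log_mul hxs.ne' hApos.ne'
  have hlog2 : Real.log (xs * (1 + B * s)) = Real.log xs + Real.log (1 + B * s) :=
    Real.log_mul hxs.ne' hBpos.ne'
  show _ = _
  rw [hA] at hlog1 hApos
  rw [hB] at hlog2 hBpos
  simp only [alphaG, betaG, Pi.div_apply]
  rw [show xs * (1 + h * σ * Real.sqrt (1-θ) * s) = xs * (1 + (h * σ * Real.sqrt (1-θ)) * s) by ring]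
  rw [hlog1, hlog2, hsqrtfac]
  have h3 : (0:ℝ) < Real.sqrt 3 := Real.sqrt_pos.mpr (by norm_num)
  have hQs : (0:ℝ) < Real.sqrt ((T - s^2*(1-θ))^2 + (T - s^2*(1-θ))*(T - s^2) + (T - s^2)^2) :=
    Real.sqrt_pos.mpr hQpos
  rw [hA, hB, hc]
  field_simp
  ring

/-- For `x* > 0`, `h ∈ ℝ`, `θ ∈ (0,1)`,
`lim_{τ→0⁺} [ln(x*(1+hσ√(τ(1−θ)))) − α^g(T−τ, T−τ(1−θ), x*(1+hσ√τ))] / β^g(T−τ, T−τ(1−θ))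
  = −h(1−√(1−θ))/√θ`. -/
theorem tendsto_log_sub_alphaG_div_betaG (r q σ T xs h θ : ℝ) (hσ : 0 < σ) (hT : 0 < T)
    (hxs : 0 < xs) (hθ : θ ∈ Set.Ioo (0:ℝ) 1) :
    Tendsto (fun τ : ℝ =>
        (Real.log (xs * (1 + h * σ * Real.sqrt (τ * (1 - θ))))
            - alphaG r q σ (T - τ) (T - τ * (1 - θ)) (xs * (1 + h * σ * Real.sqrt τ)))
          / betaG σ (T - τ) (T - τ * (1 - θ)))
      (𝓝[>] 0) (𝓝 (-h * (1 - Real.sqrt (1 - θ)) / Real.sqrt θ)) := by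
  have hmain := main_sq r q σ T xs h θ hσ hT hxs hθ
  have hcomp := hmain.comp aux_sqrt
  refine Tendsto.congr' ?_ hcomp
  filter_upwards [self_mem_nhdsWithin] with τ hτ
  have hτ0 : (0:ℝ) < τ := hτ
  simp only [Function.comp]
  rw [Real.sq_sqrt hτ0.le, Real.sqrt_mul hτ0.le]
  ring_nf
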